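/- In the coin-tossing construction, assume the forward branching process (U_k)_{k≥0} is started from level u₀ = 1 and the walk (X_n)_{n≥0} is started from X_0 = 1, both built from the same array (ξ_i^k)_{k∈ℤ, i∈ℕ}. Let τ_0^X = inf{n > 0 : X_n = 0} and U'_k = |{0 ≤ n < τ_0^X : X_n = k, X_{n+1} = k+1}| for k ≥ 1. Then for any realization of (ξ_i^k)_{k∈ℤ, i∈ℕ}, U'_k ≤ U_k for all k ≥ 1; moreover, for any realization such that τ_0^X < ∞, U'_k = U_k for all k ≥ 1. -/

import Mathlib

open MeasureTheory Filter Set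
open scoped ENNReal NNReal Classical

noncomputable section

namespace ERW

variable {𝒮 : Type}

/-! ### Transition matrices, stationary distributions, uniform ergodicity -/

/-- `n`-step transition probabilities of a transition matrix `K` on a countable state space. -/
def matPow (K : 𝒮 → 𝒮 → ℝ) : ℕ → 𝒮 → 𝒮 → ℝ
  | 0 => fun s t => if s = t then 1 else 0
  | n + 1 => fun s t => ∑' u, matPow K n s u * K u t

/-- A (row-)stochastic transition matrix. -/
structure IsTransMatrix (K : 𝒮 → 𝒮 → ℝ) : Prop where
  nonneg : ∀ s t, 0 ≤ K s t
  rowSum : ∀ s, HasSum (K s) 1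

/-- A stationary probability distribution for the transition matrix `K`. -/
structure IsStationaryDist (K : 𝒮 → 𝒮 → ℝ) (π : 𝒮 → ℝ) : Prop where
  nonneg : ∀ s, 0 ≤ π s
  total : HasSum π 1
  invariant : ∀ t, HasSum (fun s => π s * K s t) (π t)

/-- Total variation distance between two distributions on a countable space. -/
def tvDist (μ ν : 𝒮 → ℝ) : ℝ := (1 / 2) * ∑' s, |μ s - ν s|

/-- A uniformly ergodic Markov transition matrix: irreducible, aperiodic, positive
recurrent (equivalently: possessing an everywhere-positive stationary distribution `π`),
with uniform total-variation convergence of the `n`-step distributions to `π`. -/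
structure UniformlyErgodic (K : 𝒮 → 𝒮 → ℝ) (π : 𝒮 → ℝ) : Prop where
  trans : IsTransMatrix K
  irred : ∀ s t, ∃ n, 0 < matPow K n s t
  aperiodic : ∀ s, ∃ N, ∀ n, N ≤ n → 0 < matPow K n s s
  stat : IsStationaryDist K π
  statPos : ∀ s, 0 < π s
  unifTV : Tendsto (fun n => ⨆ s, tvDist (matPow K n s) π) atTop (nhds 0)

/-! ### Path laws of Markov chains -/

/-- One-sided cylinder set. -/
def cylN {α : Type*} (n : ℕ) (f : ℕ → α) : Set (ℕ → α) := {g | ∀ m, m ≤ n → g m = f m}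

/-- `μ` is the law of the time-homogeneous Markov chain with transition matrix `K`
started at `x`. -/
structure IsChainLaw {𝒵 : Type} [MeasurableSpace 𝒵] (K : 𝒵 → 𝒵 → ℝ) (x : 𝒵)
    (μ : Measure (ℕ → 𝒵)) : Prop where
  prob : IsProbabilityMeasure μ
  start : μ {f | f 0 = x} = 1
  step : ∀ (n : ℕ) (f : ℕ → 𝒵),
    μ (cylN (n + 1) f) = μ (cylN n f) * ENNReal.ofReal (K (f n) (f (n + 1)))

/-- Two-sided cylinder set. -/
def cylZ (a b : ℤ) (f : ℤ → 𝒮) : Set (ℤ → 𝒮) := {g | ∀ k : ℤ, a ≤ k → k ≤ b → g k = f k}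

/-- `μ` is the law of a two-sided process `(S_k)_{k ∈ ℤ}` which is a time-homogeneous
Markov chain with transition matrix `K`, and whose time reversal `R_k = S_{-k}` is a
time-homogeneous Markov chain with transition matrix `Krev`. -/
structure IsTwoSidedChainLaw [MeasurableSpace 𝒮] (K Krev : 𝒮 → 𝒮 → ℝ)
    (μ : Measure (ℤ → 𝒮)) : Prop where
  prob : IsProbabilityMeasure μ
  forward : ∀ a b : ℤ, a ≤ b → ∀ f : ℤ → 𝒮,
    μ (cylZ a (b + 1) f) = μ (cylZ a b f) * ENNReal.ofReal (K (f b) (f (b + 1)))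
  backward : ∀ a b : ℤ, a ≤ b → ∀ f : ℤ → 𝒮,
    μ (cylZ (a - 1) b f) = μ (cylZ a b f) * ENNReal.ofReal (Krev (f a) (f (a - 1)))

/-! ### Cookie environments and Assumption (A) -/

/-- The cookie environment determined by a realization `g` of the stack-valued chain:
`ω(k, i) = S_k(i)`. -/
def envOf (stack : 𝒮 → ℕ → ℝ) (g : ℤ → 𝒮) : ℤ → ℕ → ℝ := fun k i => stack (g k) i

/-- Assumption (A): the environment is built from a two-sided stack-valued process
`(S_k)` taking values in a countable set of elliptic cookie stacks of height `M`, such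
that both `(S_k)` and the reversed process `(R_k) = (S_{-k})` are uniformly ergodic
Markov chains (with common stationary distribution `π`). -/
structure AssumptionA [MeasurableSpace 𝒮] (M : ℕ) (stack : 𝒮 → ℕ → ℝ)
    (K Krev : 𝒮 → 𝒮 → ℝ) (π : 𝒮 → ℝ) (Senv : Measure (ℤ → 𝒮)) : Prop where
  countable : Countable 𝒮
  posM : 1 ≤ M
  stackElliptic : ∀ s, ∀ i : ℕ, 1 ≤ i → i ≤ M → stack s i ∈ Set.Ioo (0 : ℝ) 1
  stackHalf : ∀ s, ∀ i : ℕ, M < i → stack s i = 1 / 2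
  stackInj : Function.Injective stack
  chain : IsTwoSidedChainLaw K Krev Senv
  ergS : UniformlyErgodic K π
  ergR : UniformlyErgodic Krev π

/-- The drift parameter `δ = ∑_s π(s) ∑_{i=1}^M (2 s(i) - 1)`. -/
def drift (M : ℕ) (stack : 𝒮 → ℕ → ℝ) (π : 𝒮 → ℝ) : ℝ :=
  ∑' s, π s * ∑ i ∈ Finset.Icc 1 M, (2 * stack s i - 1)

/-! ### The excited random walk: quenched laws -/

/-- `I_n`: the number of visits of the walk `X` to its current site up to time `n`. -/
def visits (X : ℕ → ℤ) (n : ℕ) : ℕ :=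
  ((Finset.range (n + 1)).filter fun m => X m = X n).card

/-- One-step transition probability of the excited random walk in environment `ω`. -/
def stepProb (ω : ℤ → ℕ → ℝ) (X : ℕ → ℤ) (n : ℕ) : ℝ :=
  if X (n + 1) = X n + 1 then ω (X n) (visits X n)
  else if X (n + 1) = X n - 1 then 1 - ω (X n) (visits X n)
  else 0

/-- `μ` is the quenched law of the excited random walk in environment `ω` started
at `x₀`. -/
structure IsQuenchedLaw (ω : ℤ → ℕ → ℝ) (x₀ : ℤ) (μ : Measure (ℕ → ℤ)) : Prop where
  prob : IsProbabilityMeasure μ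
  start : μ {X | X 0 = x₀} = 1
  step : ∀ (n : ℕ) (x : ℕ → ℤ),
    μ (cylN (n + 1) x) = μ (cylN n x) * ENNReal.ofReal (stepProb ω x n)

/-! ### Coin tossing construction -/

/-- `μ` is the law of the independent array of coins `(ξ_i^k)` with
`P(ξ_i^k = 1) = ω(k, i)`. -/
structure IsCoinLaw (ω : ℤ → ℕ → ℝ) (μ : Measure (ℤ → ℕ → Bool)) : Prop where
  prob : IsProbabilityMeasure μ
  cyl : ∀ (F : Finset (ℤ × ℕ)) (v : ℤ × ℕ → Bool),
    μ {ξ | ∀ p ∈ F, ξ p.1 p.2 = v p} =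
      ∏ p ∈ F, ENNReal.ofReal (if v p = true then ω p.1 p.2 else 1 - ω p.1 p.2)

/-- Number of failures among the coins `ξ_1, …, ξ_{i-1}`. -/
def failBefore (b : ℕ → Bool) (i : ℕ) : ℕ :=
  ((Finset.Ico 1 i).filter fun j => b j = false).card

/-- Number of successes among the coins `ξ_1, …, ξ_{i-1}`. -/
def succBefore (b : ℕ → Bool) (i : ℕ) : ℕ :=
  ((Finset.Ico 1 i).filter fun j => b j = true).card

/-- Number of successes in the sequence `b` before the `m`-th failure. -/
def succCount (b : ℕ → Bool) (m : ℕ∞) : ℕ∞ :=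
  {i : ℕ | 1 ≤ i ∧ b i = true ∧ (failBefore b i : ℕ∞) < m}.encard

/-- Number of failures in the sequence `b` before the `m`-th success. -/
def failCount (b : ℕ → Bool) (m : ℕ∞) : ℕ∞ :=
  {i : ℕ | 1 ≤ i ∧ b i = false ∧ (succBefore b i : ℕ∞) < m}.encard

/-- The forward branching process built from the coin array `ξ`. -/
def Uproc (ξ : ℤ → ℕ → Bool) (u₀ : ℕ∞) : ℕ → ℕ∞
  | 0 => u₀
  | k + 1 => succCount (ξ ((k : ℤ) + 1)) (Uproc ξ u₀ k)

/-- The backward branching process built from the coin array `ξ`. -/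
def Vproc (ξ : ℤ → ℕ → Bool) (v₀ : ℕ∞) : ℕ → ℕ∞
  | 0 => v₀
  | k + 1 => failCount (ξ (-((k : ℤ) + 1))) (Vproc ξ v₀ k + 1)

/-- Auxiliary: position of the coin-tossing walk together with its visit counts. -/
def walkAux (ξ : ℤ → ℕ → Bool) (x : ℤ) : ℕ → ℤ × (ℤ → ℕ)
  | 0 => (x, fun z => if z = x then 1 else 0)
  | n + 1 =>
      let p := walkAux ξ x n
      let pos := p.1 + (if ξ p.1 (p.2 p.1) = true then 1 else -1)
      (pos, fun z => if z = pos then p.2 z + 1 else p.2 z)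

/-- The excited random walk constructed from the coin array `ξ`, started at `x`:
`X_{n+1} = X_n + (2 ξ_{I_n}^{X_n} - 1)`. -/
def cwalk (ξ : ℤ → ℕ → Bool) (x : ℤ) (n : ℕ) : ℤ := (walkAux ξ x n).1

/-! ### `ℕ∞`-valued stopping-time helpers -/

/-- Canonical map `ℕ∞ → ℝ≥0∞`. -/
def toE (v : ℕ∞) : ℝ≥0∞ := if v = ⊤ then ⊤ else (v.toNat : ℝ≥0∞)

/-- Value of a process at a possibly infinite time (`⊤` at time `⊤`). -/
def stopVal (u : ℕ → ℕ∞) (τ : ℕ∞) : ℕ∞ := if τ = ⊤ then ⊤ else u τ.toNat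

/-- Sum `∑_{k=0}^τ u_k` of a process up to a possibly infinite time. -/
def sumTo (u : ℕ → ℕ∞) (τ : ℕ∞) : ℕ∞ :=
  if τ = ⊤ then ⊤ else ∑ k ∈ Finset.range (τ.toNat + 1), u k

/-- First time `m > 0` at which `p` holds (`⊤` if never). -/
def hitTime (p : ℕ → Prop) : ℕ∞ := ⨅ (m : ℕ) (_ : 0 < m ∧ p m), (m : ℕ∞)

/-- First time strictly after `t` at which `p` holds. -/
def nextHit (p : ℕ → Prop) (t : ℕ∞) : ℕ∞ := ⨅ (m : ℕ) (_ : t < (m : ℕ∞) ∧ p m), (m : ℕ∞)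

/-- Successive times `≥ 0` at which `p` holds. -/
def retTime (p : ℕ → Prop) : ℕ → ℕ∞
  | 0 => ⨅ (m : ℕ) (_ : p m), (m : ℕ∞)
  | k + 1 => nextHit p (retTime p k)

/-- `|v - x| ≥ c` for `v : ℕ∞` (where `⊤` is infinitely far from `x`). -/
def devGE (v : ℕ∞) (x : ℕ) (c : ℝ) : Prop := v = ⊤ ∨ c ≤ |(v.toNat : ℝ) - (x : ℝ)|

/-- `v > c` for `v : ℕ∞`, `c : ℝ`. -/
def gtReal (v : ℕ∞) (c : ℝ) : Prop := v = ⊤ ∨ c < (v.toNat : ℝ)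

/-- `v < c` for `v : ℕ∞`, `c : ℝ`. -/
def ltReal (v : ℕ∞) (c : ℝ) : Prop := v ≠ ⊤ ∧ (v.toNat : ℝ) < c

/-- `τ_s^S`: first positive hitting time of the stack `s` by the forward chain. -/
def tauS (s : 𝒮) (g : ℤ → 𝒮) : ℕ∞ := hitTime fun m => g (m : ℤ) = s

/-- `τ_s^R`: first positive hitting time of the stack `s` by the reversed chain. -/
def tauR (s : 𝒮) (g : ℤ → 𝒮) : ℕ∞ := hitTime fun m => g (-(m : ℤ)) = s

/-- The environment law conditioned on `S_0 = s`. -/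
def condAt [MeasurableSpace 𝒮] (Senv : Measure (ℤ → 𝒮)) (s : 𝒮) : Measure (ℤ → 𝒮) :=
  ProbabilityTheory.cond Senv {g | g 0 = s}

/-- `μ_s`: the mean return time to `s` of the chain started from `s`. -/
def meanReturn [MeasurableSpace 𝒮] (Senv : Measure (ℤ → 𝒮)) (s : 𝒮) : ℝ :=
  (∫⁻ g, toE (tauS s g) ∂condAt Senv s).toReal

/-- The observed backward branching process `V̂_k = V_{τ_k}`, where `τ_k` are the
successive times `j ≥ 0` with `R_j = s`. -/
def VhatProc (s : 𝒮) (g : ℤ → 𝒮) (ξ : ℤ → ℕ → Bool) (v₀ : ℕ∞) (k : ℕ) : ℕ∞ :=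
  stopVal (Vproc ξ v₀) (retTime (fun m => g (-(m : ℤ)) = s) k)


/-! ### Auxiliary development for Lemma 2.1 -/

/-- The walk. -/
private def wkX (ξ : ℤ → ℕ → Bool) (n : ℕ) : ℤ := cwalk ξ 1 n

/-- Number of visits to `z` strictly before time `n`. -/
private def vct (ξ : ℤ → ℕ → Bool) (n : ℕ) (z : ℤ) : ℕ :=
  ((Finset.range n).filter fun m => wkX ξ m = z).card

/-- Number of up-jumps from `z` strictly before time `n`. -/
private def ups (ξ : ℤ → ℕ → Bool) (n : ℕ) (z : ℤ) : ℕ :=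
  ((Finset.range n).filter fun m => wkX ξ m = z ∧ wkX ξ (m + 1) = z + 1).card

/-- Number of down-jumps from `z` strictly before time `n`. -/
private def dns (ξ : ℤ → ℕ → Bool) (n : ℕ) (z : ℤ) : ℕ :=
  ((Finset.range n).filter fun m => wkX ξ m = z ∧ wkX ξ (m + 1) = z - 1).card

private lemma card_filter_range_succ (p : ℕ → Prop) [DecidablePred p] (n : ℕ) :
    ((Finset.range (n + 1)).filter fun m => p m).card
      = ((Finset.range n).filter fun m => p m).card + if p n then 1 else 0 := by
  rw [Finset.range_add_one, Finset.filter_insert]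
  by_cases h : p n
  · rw [if_pos h, if_pos h, Finset.card_insert_of_notMem (by simp)]
  · rw [if_neg h, if_neg h, Nat.add_zero]

private lemma wkX_zero (ξ : ℤ → ℕ → Bool) : wkX ξ 0 = 1 := rfl

private lemma vct_succ (ξ : ℤ → ℕ → Bool) (n : ℕ) (z : ℤ) :
    vct ξ (n + 1) z = vct ξ n z + if wkX ξ n = z then 1 else 0 := by
  unfold vct; exact card_filter_range_succ _ n

private lemma ups_succ (ξ : ℤ → ℕ → Bool) (n : ℕ) (z : ℤ) :
    ups ξ (n + 1) z = ups ξ n z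
      + if wkX ξ n = z ∧ wkX ξ (n + 1) = z + 1 then 1 else 0 := by
  unfold ups; exact card_filter_range_succ _ n

private lemma dns_succ (ξ : ℤ → ℕ → Bool) (n : ℕ) (z : ℤ) :
    dns ξ (n + 1) z = dns ξ n z
      + if wkX ξ n = z ∧ wkX ξ (n + 1) = z - 1 then 1 else 0 := by
  unfold dns; exact card_filter_range_succ _ n

private lemma walkAux_snd (ξ : ℤ → ℕ → Bool) :
    ∀ n z, (walkAux ξ 1 n).2 z = vct ξ (n + 1) z := by
  intro n
  induction n with
  | zero =>
    intro z
    have : vct ξ 1 z = if wkX ξ 0 = z then 1 else 0 := by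
      rw [show (1 : ℕ) = 0 + 1 from rfl, vct_succ]
      simp [vct]
    rw [this, wkX_zero]
    simp [walkAux, eq_comm]
  | succ n ih =>
    intro z
    have h2 : (walkAux ξ 1 (n + 1)).2 z
        = if z = (walkAux ξ 1 (n + 1)).1 then (walkAux ξ 1 n).2 z + 1
          else (walkAux ξ 1 n).2 z := rfl
    rw [h2, ih z, vct_succ ξ (n + 1) z]
    have : (walkAux ξ 1 (n + 1)).1 = wkX ξ (n + 1) := rfl
    rw [this]
    by_cases h : wkX ξ (n + 1) = z
    · rw [if_pos h.symm, if_pos h]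
    · rw [if_neg (fun hh => h hh.symm), if_neg h]; omega

/-- The step of the walk: coin index at time `n` is `vct ξ n (wkX ξ n) + 1`. -/
private lemma wkX_succ (ξ : ℤ → ℕ → Bool) (n : ℕ) :
    wkX ξ (n + 1) = wkX ξ n
      + (if ξ (wkX ξ n) (vct ξ n (wkX ξ n) + 1) = true then 1 else -1) := by
  have h1 : wkX ξ (n + 1)
      = wkX ξ n + (if ξ (wkX ξ n) ((walkAux ξ 1 n).2 (wkX ξ n)) = true then 1 else -1) := rfl
  rw [h1, walkAux_snd ξ n (wkX ξ n), vct_succ]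
  simp

private lemma step_cases (ξ : ℤ → ℕ → Bool) (n : ℕ) :
    wkX ξ (n + 1) = wkX ξ n + 1 ∨ wkX ξ (n + 1) = wkX ξ n - 1 := by
  rw [wkX_succ]
  by_cases h : ξ (wkX ξ n) (vct ξ n (wkX ξ n) + 1) = true
  · left; rw [if_pos h]
  · right; rw [if_neg h]; ring

private lemma coin_true_of_up (ξ : ℤ → ℕ → Bool) (n : ℕ)
    (h : wkX ξ (n + 1) = wkX ξ n + 1) :
    ξ (wkX ξ n) (vct ξ n (wkX ξ n) + 1) = true := by
  by_contra hc
  rw [wkX_succ, if_neg hc] at h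
  omega

private lemma coin_false_of_down (ξ : ℤ → ℕ → Bool) (n : ℕ)
    (h : wkX ξ (n + 1) = wkX ξ n - 1) :
    ξ (wkX ξ n) (vct ξ n (wkX ξ n) + 1) = false := by
  by_cases hc : ξ (wkX ξ n) (vct ξ n (wkX ξ n) + 1) = true
  · rw [wkX_succ, if_pos hc] at h; omega
  · simpa using hc

private lemma failBefore_succ (b : ℕ → Bool) (i : ℕ) (hi : 1 ≤ i) :
    failBefore b (i + 1) = failBefore b i + if b i = false then 1 else 0 := by
  unfold failBefore
  rw [Nat.Ico_succ_right_eq_insert_Ico hi, Finset.filter_insert]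
  by_cases h : b i = false
  · rw [if_pos h, Finset.card_insert_of_notMem (by simp), if_pos h]
  · rw [if_neg h, if_neg h, Nat.add_zero]

private lemma succBefore_succ (b : ℕ → Bool) (i : ℕ) (hi : 1 ≤ i) :
    succBefore b (i + 1) = succBefore b i + if b i = true then 1 else 0 := by
  unfold succBefore
  rw [Nat.Ico_succ_right_eq_insert_Ico hi, Finset.filter_insert]
  by_cases h : b i = true
  · rw [if_pos h, Finset.card_insert_of_notMem (by simp), if_pos h]
  · rw [if_neg h, if_neg h, Nat.add_zero]

private lemma failBefore_mono (b : ℕ → Bool) {i j : ℕ} (h : i ≤ j) :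
    failBefore b i ≤ failBefore b j :=
  Finset.card_le_card (Finset.filter_subset_filter _ (Finset.Ico_subset_Ico le_rfl h))

/-- The coins used at site `z` before time `n` record exactly the down-jumps
(failures) and up-jumps (successes) from `z` before time `n`. -/
private lemma coins_eq (ξ : ℤ → ℕ → Bool) (z : ℤ) : ∀ n : ℕ,
    failBefore (ξ z) (vct ξ n z + 1) = dns ξ n z ∧
    succBefore (ξ z) (vct ξ n z + 1) = ups ξ n z := by
  intro n
  induction n with
  | zero =>
    constructor <;> simp [vct, failBefore, succBefore, dns, ups]
  | succ n ih =>
    rw [vct_succ, dns_succ, ups_succ]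
    by_cases hz : wkX ξ n = z
    · rw [if_pos hz]
      have hidx : ξ z (vct ξ n z + 1) = ξ (wkX ξ n) (vct ξ n (wkX ξ n) + 1) := by rw [hz]
      have h1 : (1 : ℕ) ≤ vct ξ n z + 1 := by omega
      rcases step_cases ξ n with hstep | hstep
      · have hcoin : ξ z (vct ξ n z + 1) = true := by
          rw [hidx]; exact coin_true_of_up ξ n hstep
        have hnd : ¬(wkX ξ n = z ∧ wkX ξ (n + 1) = z - 1) := by
          rintro ⟨-, h⟩; rw [hstep, hz] at h; omega
        have hu : wkX ξ n = z ∧ wkX ξ (n + 1) = z + 1 := ⟨hz, by rw [hstep, hz]⟩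
        rw [if_neg hnd, if_pos hu]
        refine ⟨?_, ?_⟩
        · rw [failBefore_succ _ _ h1, hcoin]; simp [ih.1]
        · rw [succBefore_succ _ _ h1, hcoin]; simp [ih.2]
      · have hcoin : ξ z (vct ξ n z + 1) = false := by
          rw [hidx]; exact coin_false_of_down ξ n hstep
        have hnd : ¬(wkX ξ n = z ∧ wkX ξ (n + 1) = z + 1) := by
          rintro ⟨-, h⟩; rw [hstep, hz] at h; omega
        have hd : wkX ξ n = z ∧ wkX ξ (n + 1) = z - 1 := ⟨hz, by rw [hstep, hz]⟩
        rw [if_neg hnd, if_pos hd]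
        refine ⟨?_, ?_⟩
        · rw [failBefore_succ _ _ h1, hcoin]; simp [ih.1]
        · rw [succBefore_succ _ _ h1, hcoin]; simp [ih.2]
    · rw [if_neg hz, if_neg (fun h => hz h.1), if_neg (fun h => hz h.1),
        Nat.add_zero, Nat.add_zero, Nat.add_zero]
      exact ih

/-- Crossing identity for the edge `(z, z+1)` (the walk starts at `1 ≤ z`). -/
private lemma crossing (ξ : ℤ → ℕ → Bool) (z : ℤ) (hz : 1 ≤ z) : ∀ n : ℕ,
    ups ξ n z = dns ξ n (z + 1) + if z + 1 ≤ wkX ξ n then 1 else 0 := by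
  intro n
  induction n with
  | zero =>
    rw [wkX_zero, if_neg (by omega)]
    simp [ups, dns]
  | succ n ih =>
    rw [ups_succ, dns_succ, ih]
    have hst := step_cases ξ n
    have h1 : z + 1 - 1 = z := by ring
    rw [h1]
    split_ifs <;> omega

/-- Intermediate value: a `±1` walk starting `≥ v` and ending `≤ v` hits `v`. -/
private lemma ivt (ξ : ℤ → ℕ → Bool) (v : ℤ) :
    ∀ d a : ℕ, v ≤ wkX ξ a → wkX ξ (a + d) ≤ v → ∃ c ≤ d, wkX ξ (a + c) = v := by
  intro d
  induction d with
  | zero =>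
    intro a h1 h2
    exact ⟨0, le_rfl, le_antisymm h2 h1⟩
  | succ d ih =>
    intro a h1 h2
    by_cases he : wkX ξ a = v
    · exact ⟨0, by omega, he⟩
    · have hgt : v + 1 ≤ wkX ξ a := by omega
      have hstep := step_cases ξ a
      have h1' : v ≤ wkX ξ (a + 1) := by omega
      have h2' : wkX ξ (a + 1 + d) ≤ v := by
        rw [show a + 1 + d = a + (d + 1) by omega]; exact h2
      obtain ⟨c, hc, hcv⟩ := ih (a + 1) h1' h2'
      exact ⟨c + 1, by omega, by rw [show a + (c + 1) = a + 1 + c by omega]; exact hcv⟩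

private lemma vct_strict (ξ : ℤ → ℕ → Bool) (z : ℤ) {n n' : ℕ} (h : n < n')
    (hn : wkX ξ n = z) : vct ξ n z < vct ξ n' z := by
  apply Finset.card_lt_card
  constructor
  · exact Finset.filter_subset_filter _ (Finset.range_subset_range.2 (by omega))
  · intro hsub
    have : n ∈ (Finset.range n').filter fun m => wkX ξ m = z := by
      simp [Finset.mem_filter, Finset.mem_range, h, hn]
    have := hsub this
    simp [Finset.mem_filter, Finset.mem_range] at this


/-- The set of up-jump times from site `k` before the walk hits `0`. -/
private def Aset (ξ : ℤ → ℕ → Bool) (k : ℕ) : Set ℕ :=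
  {n : ℕ | (∀ m, m ≤ n → cwalk ξ 1 m ≠ 0) ∧ cwalk ξ 1 n = (k : ℤ) ∧
      cwalk ξ 1 (n + 1) = (k : ℤ) + 1}

private lemma Uproc_zero (ξ : ℤ → ℕ → Bool) : Uproc ξ 1 0 = 1 := rfl

private lemma Uproc_succ (ξ : ℤ → ℕ → Bool) (j : ℕ) :
    Uproc ξ 1 (j + 1) = succCount (ξ ((j : ℤ) + 1)) (Uproc ξ 1 j) := rfl

/-- Part 1: `U'_k ≤ U_k`. -/
private lemma part_le (ξ : ℤ → ℕ → Bool) :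
    ∀ k : ℕ, 1 ≤ k → (Aset ξ k).encard ≤ Uproc ξ 1 k := by
  intro k
  induction k using Nat.strong_induction_on with
  | _ k IH =>
    intro hk
    obtain ⟨j, rfl⟩ : ∃ j, k = j + 1 := ⟨k - 1, by omega⟩
    set z : ℤ := (j : ℤ) + 1 with hzdef
    have hz : ((j + 1 : ℕ) : ℤ) = z := by rw [hzdef]; push_cast; ring
    -- the failures before any up-jump from `z` are fewer than `U_j`
    have hfail : ∀ n ∈ Aset ξ (j + 1), (dns ξ n z : ℕ∞) < Uproc ξ 1 j := by
      intro n hn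
      obtain ⟨h0, hxn, hxn1⟩ := hn
      rcases Nat.eq_zero_or_pos j with rfl | hj
      · have hz1 : z = 1 := by rw [hzdef]; norm_num
        have hd0 : dns ξ n z = 0 := by
          unfold dns
          rw [Finset.card_eq_zero, Finset.filter_eq_empty_iff]
          intro m hm
          rintro ⟨-, h1⟩
          have hmem : m < n := Finset.mem_range.mp hm
          have h00 : wkX ξ (m + 1) = 0 := by rw [h1, hz1]; ring
          exact (h0 (m + 1) (by omega)) h00
        rw [hd0, Uproc_zero]
        exact_mod_cast (by norm_num : (0 : ℕ∞) < 1)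
      · have hxz : wkX ξ n = z := by
          show cwalk ξ 1 n = z; rw [hxn, hz]
        have hcross := crossing ξ (j : ℤ) (by exact_mod_cast hj) n
        rw [if_pos (by rw [hxz, hzdef] : (j : ℤ) + 1 ≤ wkX ξ n)] at hcross
        rw [← hzdef] at hcross
        have hsub : ↑((Finset.range n).filter
            fun m => wkX ξ m = (j : ℤ) ∧ wkX ξ (m + 1) = (j : ℤ) + 1) ⊆ Aset ξ j := by
          intro m hm
          simp only [Finset.coe_filter, Finset.mem_range, Set.mem_setOf_eq] at hm
          exact ⟨fun m' hm' => h0 m' (by omega), hm.2.1, hm.2.2⟩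
        have h1 : (ups ξ n (j : ℤ) : ℕ∞) ≤ (Aset ξ j).encard := by
          unfold ups
          rw [← Set.encard_coe_eq_coe_finsetCard]
          exact Set.encard_mono hsub
        have h3 : (ups ξ n (j : ℤ) : ℕ∞) ≤ Uproc ξ 1 j := h1.trans (IH j (by omega) hj)
        calc (dns ξ n z : ℕ∞) < ((dns ξ n z + 1 : ℕ) : ℕ∞) := by
              exact_mod_cast Nat.lt_succ_self _
          _ = (ups ξ n (j : ℤ) : ℕ∞) := by exact_mod_cast hcross.symm
          _ ≤ Uproc ξ 1 j := h3
    have hmap : Set.MapsTo (fun n => vct ξ n z + 1) (Aset ξ (j + 1))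
        {i : ℕ | 1 ≤ i ∧ ξ z i = true ∧ (failBefore (ξ z) i : ℕ∞) < Uproc ξ 1 j} := by
      intro n hn
      obtain ⟨h0, hxn, hxn1⟩ := hn
      have hxz : wkX ξ n = z := by show cwalk ξ 1 n = z; rw [hxn, hz]
      have hup : wkX ξ (n + 1) = wkX ξ n + 1 := by
        rw [hxz]; show cwalk ξ 1 (n + 1) = z + 1; rw [hxn1, hz]
      have hcoin := coin_true_of_up ξ n hup
      rw [hxz] at hcoin
      refine ⟨Nat.le_add_left 1 _, hcoin, ?_⟩
      rw [(coins_eq ξ z n).1]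
      exact hfail n ⟨h0, hxn, hxn1⟩
    have hinj : Set.InjOn (fun n => vct ξ n z + 1) (Aset ξ (j + 1)) := by
      intro a ha b hb hab
      simp only at hab
      by_contra hne
      have haz : wkX ξ a = z := by show cwalk ξ 1 a = z; rw [ha.2.1, hz]
      have hbz : wkX ξ b = z := by show cwalk ξ 1 b = z; rw [hb.2.1, hz]
      rcases Nat.lt_or_ge a b with h | h
      · have := vct_strict ξ z h haz; omega
      · have hba : b < a := by omega
        have := vct_strict ξ z hba hbz; omega
    calc (Aset ξ (j + 1)).encard
        = ((fun n => vct ξ n z + 1) '' Aset ξ (j + 1)).encard := (hinj.encard_image).symm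
      _ ≤ ({i : ℕ | 1 ≤ i ∧ ξ z i = true ∧
            (failBefore (ξ z) i : ℕ∞) < Uproc ξ 1 j}).encard :=
          Set.encard_mono (hmap.image_subset)
      _ = Uproc ξ 1 (j + 1) := by
          rw [Uproc_succ ξ j, ← hzdef]
          rfl

/-- Part 2: if the walk hits `0`, then `U'_k = U_k`. -/
private lemma part_eq (ξ : ℤ → ℕ → Bool) (hT : ∃ n : ℕ, 0 < n ∧ cwalk ξ 1 n = 0) :
    ∀ k : ℕ, 1 ≤ k → (Aset ξ k).encard = Uproc ξ 1 k := by
  classical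
  set T := Nat.find hT with hTdef
  have hTspec := Nat.find_spec hT
  have hTpos : 0 < T := hTspec.1
  have hT0 : wkX ξ T = 0 := hTspec.2
  have hne : ∀ m, m < T → wkX ξ m ≠ 0 := by
    intro m hm
    rcases Nat.eq_zero_or_pos m with rfl | hmp
    · rw [wkX_zero]; norm_num
    · intro h
      exact (Nat.find_min hT hm) ⟨hmp, h⟩
  have hAeq : ∀ k : ℕ, (Aset ξ k).encard = (ups ξ T (k : ℤ) : ℕ∞) := by
    intro k
    have hset : Aset ξ k = ↑((Finset.range T).filter
        fun m => wkX ξ m = (k : ℤ) ∧ wkX ξ (m + 1) = (k : ℤ) + 1) := by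
      ext n
      simp only [Aset, Set.mem_setOf_eq, Finset.coe_filter, Finset.mem_range]
      constructor
      · rintro ⟨h0, h1, h2⟩
        refine ⟨?_, h1, h2⟩
        by_contra hnt
        exact h0 T (by omega) hT0
      · rintro ⟨hnT, h1, h2⟩
        exact ⟨fun m hm => hne m (by omega), h1, h2⟩
    rw [hset, Set.encard_coe_eq_coe_finsetCard]
    rfl
  have hT1 : wkX ξ (T - 1) = 1 := by
    have hstep := step_cases ξ (T - 1)
    rw [show T - 1 + 1 = T by omega, hT0] at hstep
    rcases hstep with h | h
    · exfalso
      have hneg : wkX ξ (T - 1) = -1 := by omega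
      obtain ⟨c, hc, hcv⟩ := ivt ξ 0 (T - 1) 0
        (by rw [wkX_zero]; norm_num)
        (by rw [Nat.zero_add, hneg]; norm_num)
      rw [Nat.zero_add] at hcv
      rcases Nat.eq_zero_or_pos c with rfl | hcp
      · rw [wkX_zero] at hcv; norm_num at hcv
      · exact hne c (by omega) hcv
    · omega
  have hdns1 : dns ξ T 1 = 1 := by
    have hsing : (Finset.range T).filter
        (fun m => wkX ξ m = 1 ∧ wkX ξ (m + 1) = (1 : ℤ) - 1) = {T - 1} := by
      ext m
      simp only [Finset.mem_filter, Finset.mem_range, Finset.mem_singleton]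
      constructor
      · rintro ⟨hm, h1, h2⟩
        have h2' : wkX ξ (m + 1) = 0 := by rw [h2]; ring
        by_contra hne'
        exact hne (m + 1) (by omega) h2'
      · rintro rfl
        exact ⟨by omega, hT1,
          by rw [show T - 1 + 1 = T by omega, hT0]; ring⟩
    unfold dns
    rw [hsing, Finset.card_singleton]
  have key : ∀ k : ℕ, 1 ≤ k → (ups ξ T (k : ℤ) : ℕ∞) = Uproc ξ 1 k := by
    intro k
    induction k using Nat.strong_induction_on with
    | _ k IH =>
      intro hk
      obtain ⟨j, rfl⟩ : ∃ j, k = j + 1 := ⟨k - 1, by omega⟩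
      set z : ℤ := (j : ℤ) + 1 with hzdef
      have hz : ((j + 1 : ℕ) : ℤ) = z := by rw [hzdef]; push_cast; ring
      have hz1 : (1 : ℤ) ≤ z := by
        have : (0 : ℤ) ≤ (j : ℤ) := Int.natCast_nonneg j
        omega
      -- the number of down-jumps from `z` before `T` equals `U_j`
      have hdz : (dns ξ T z : ℕ∞) = Uproc ξ 1 j := by
        rcases Nat.eq_zero_or_pos j with rfl | hj
        · have h1 : z = 1 := by rw [hzdef]; norm_num
          rw [h1, hdns1, Uproc_zero]
          exact_mod_cast Nat.cast_one
        · have hcr := crossing ξ (j : ℤ) (by exact_mod_cast hj) T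
          rw [hT0, if_neg (by omega), ← hzdef] at hcr
          rw [← IH j (by omega) hj]
          exact_mod_cast (by omega : dns ξ T z = ups ξ T (j : ℤ))
      have hfb : failBefore (ξ z) (vct ξ T z + 1) = dns ξ T z := (coins_eq ξ z T).1
      have hsb : succBefore (ξ z) (vct ξ T z + 1) = ups ξ T z := (coins_eq ξ z T).2
      -- the last coin used at site `z` before `T` is a failure
      have hlast : 1 ≤ vct ξ T z → ξ z (vct ξ T z) = false := by
        intro hv
        have hv' : 0 < ((Finset.range T).filter fun m => wkX ξ m = z).card := by
          unfold vct at hv; omega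
        have hne' : ((Finset.range T).filter fun m => wkX ξ m = z).Nonempty :=
          Finset.card_pos.mp hv'
        set m := Finset.max' _ hne' with hm
        have hmmem := Finset.max'_mem _ hne'
        rw [← hm] at hmmem
        rw [Finset.mem_filter, Finset.mem_range] at hmmem
        obtain ⟨hmT, hmz⟩ := hmmem
        have hvm : vct ξ (m + 1) z = vct ξ T z := by
          unfold vct
          congr 1
          apply Finset.Subset.antisymm
          · exact Finset.filter_subset_filter _ (Finset.range_subset_range.2 (by omega))
          · intro x hx
            rw [Finset.mem_filter, Finset.mem_range] at hx
            have hxm : x ≤ m :=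
              Finset.le_max' _ x (by rw [Finset.mem_filter, Finset.mem_range]; exact hx)
            rw [Finset.mem_filter, Finset.mem_range]
            exact ⟨by omega, hx.2⟩
        have hdown : wkX ξ (m + 1) = wkX ξ m - 1 := by
          rcases step_cases ξ m with h | h
          · exfalso
            obtain ⟨c, hc, hcv⟩ := ivt ξ z (T - (m + 1)) (m + 1)
              (by rw [h, hmz]; omega)
              (by rw [show m + 1 + (T - (m + 1)) = T by omega, hT0]; omega)
            have hcT : m + 1 + c ≠ T := by
              intro he; rw [he, hT0] at hcv; omega
            have hmem2 : m + 1 + c ∈ (Finset.range T).filter fun m => wkX ξ m = z := by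
              rw [Finset.mem_filter, Finset.mem_range]
              exact ⟨by omega, hcv⟩
            have := Finset.le_max' _ _ hmem2
            rw [← hm] at this
            omega
          · exact h
        have hcoin := coin_false_of_down ξ m hdown
        rw [hmz] at hcoin
        have hidx : vct ξ m z + 1 = vct ξ T z := by
          rw [← hvm, vct_succ, if_pos hmz]
        rw [hidx] at hcoin
        exact hcoin
      -- the success-count set is exactly the set of up-jump coins
      have hSB : {i : ℕ | 1 ≤ i ∧ ξ z i = true ∧ (failBefore (ξ z) i : ℕ∞) < Uproc ξ 1 j}
          = ↑((Finset.Ico 1 (vct ξ T z + 1)).filter fun i => ξ z i = true) := by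
        ext i
        simp only [Set.mem_setOf_eq, Finset.coe_filter, Finset.mem_Ico]
        rw [← hdz]
        constructor
        · rintro ⟨hi1, hit, hlt⟩
          have hlt' : failBefore (ξ z) i < dns ξ T z := by exact_mod_cast hlt
          refine ⟨⟨hi1, ?_⟩, hit⟩
          by_contra hge
          have hge' : vct ξ T z + 1 ≤ i := by omega
          have hmono := failBefore_mono (ξ z) hge'
          rw [hfb] at hmono
          omega
        · rintro ⟨⟨hi1, hile⟩, hit⟩
          refine ⟨hi1, hit, ?_⟩
          have hv1 : 1 ≤ vct ξ T z := by omega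
          have hfls := hlast hv1
          have hine : i ≠ vct ξ T z := by
            intro he; rw [he, hfls] at hit; exact absurd hit (by norm_num)
          have hmono := failBefore_mono (ξ z) (show i ≤ vct ξ T z by omega)
          have hstep2 : failBefore (ξ z) (vct ξ T z + 1)
              = failBefore (ξ z) (vct ξ T z) + 1 := by
            rw [failBefore_succ _ _ hv1, hfls, if_pos rfl]
          rw [hfb] at hstep2
          exact_mod_cast (by omega : failBefore (ξ z) i < dns ξ T z)
      have hfin : Uproc ξ 1 (j + 1) = (ups ξ T z : ℕ∞) := by
        rw [Uproc_succ ξ j, ← hzdef]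
        show {i : ℕ | 1 ≤ i ∧ ξ z i = true ∧
            (failBefore (ξ z) i : ℕ∞) < Uproc ξ 1 j}.encard = _
        rw [hSB, Set.encard_coe_eq_coe_finsetCard]
        exact_mod_cast hsb
      rw [show ((j + 1 : ℕ) : ℤ) = z from hz, hfin]
  intro k hk
  rw [hAeq k, key k hk]

/-- Lemma 2.1. For the coin-tossing construction with `U₀ = 1` and
`X₀ = 1` built from the same coin array `ξ`: `U'_k ≤ U_k` for all `k ≥ 1`, and if
`τ₀^X < ∞` then `U'_k = U_k` for all `k ≥ 1`.  Here
`U'_k = |{0 ≤ n < τ₀^X : X_n = k, X_{n+1} = k + 1}|`. -/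
theorem forward_bp_right_jumps (ξ : ℤ → ℕ → Bool) :
    (∀ k : ℕ, 1 ≤ k →
      {n : ℕ | (∀ m, m ≤ n → cwalk ξ 1 m ≠ 0) ∧ cwalk ξ 1 n = (k : ℤ) ∧
          cwalk ξ 1 (n + 1) = (k : ℤ) + 1}.encard ≤ Uproc ξ 1 k) ∧
    ((∃ n : ℕ, 0 < n ∧ cwalk ξ 1 n = 0) →
      ∀ k : ℕ, 1 ≤ k →
        {n : ℕ | (∀ m, m ≤ n → cwalk ξ 1 m ≠ 0) ∧ cwalk ξ 1 n = (k : ℤ) ∧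
            cwalk ξ 1 (n + 1) = (k : ℤ) + 1}.encard = Uproc ξ 1 k) :=
  ⟨part_le ξ, part_eq ξ⟩

end ERW
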